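/- Let G be a finite simple graph, let c and d be natural numbers, and suppose the vertex set of G is partitioned into c sets V_1, …, V_c such that for each i, any two vertices lying in the same connected component of the induced subgraph G[V_i] are at distance at most d within G[V_i]. If every cycle of G has length greater than 2d+1 (equivalently, the girth of G exceeds 2d+1), then the chromatic number of G is at most 2c. -/
import Mathlib


open SimpleGraph Walk

private lemma aux_split {W : Type*} [DecidableEq W] {H : SimpleGraph W} {r x z : W}
    (p : H.Walk r x) (hp : p.length = H.dist r x) (hz : z ∈ p.support) :
    H.dist r z = (p.takeUntil z hz).length ∧ H.dist z x = (p.dropUntil z hz).length := by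
  have h1 : H.dist r z ≤ (p.takeUntil z hz).length := SimpleGraph.dist_le _
  have h2 : H.dist z x ≤ (p.dropUntil z hz).length := SimpleGraph.dist_le _
  have h3 : (p.takeUntil z hz).length + (p.dropUntil z hz).length = p.length := by
    have := congrArg Walk.length (p.take_spec hz)
    rwa [Walk.length_append] at this
  obtain ⟨w1, hw1⟩ := (p.takeUntil z hz).reachable.exists_walk_length_eq_dist
  obtain ⟨w2, hw2⟩ := (p.dropUntil z hz).reachable.exists_walk_length_eq_dist
  have h4 : H.dist r x ≤ H.dist r z + H.dist z x := by
    rw [← hw1, ← hw2, ← Walk.length_append]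
    exact SimpleGraph.dist_le _
  omega

private lemma no_equal_level_adj {W : Type*} [Fintype W] [DecidableEq W]
    {H : SimpleGraph W} {d : ℕ}
    (hgirth : ∀ (z : W) (cyc : H.Walk z z), cyc.IsCycle → 2*d + 1 < cyc.length)
    {r u v : W} (huv : H.Adj u v) (hru : H.Reachable r u)
    (hk : H.dist r u ≤ d) (heq : H.dist r u = H.dist r v) : False := by
  classical
  obtain ⟨p, hp_path, hp_len⟩ := hru.exists_path_of_dist
  have hrv : H.Reachable r v := hru.trans huv.reachable
  obtain ⟨q, hq_path, hq_len⟩ := hrv.exists_path_of_dist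
  have hq_len' : q.length = H.dist r u := by rw [hq_len, ← heq]
  -- u not on q
  have hu_not_q : u ∉ q.support := by
    intro hu
    have h1 : H.dist r u ≤ (q.takeUntil u hu).length := SimpleGraph.dist_le _
    have h3 : (q.takeUntil u hu).length + (q.dropUntil u hu).length = q.length := by
      have := congrArg Walk.length (q.take_spec hu)
      rwa [Walk.length_append] at this
    have : (q.dropUntil u hu).length = 0 := by omega
    exact huv.ne (Walk.eq_of_length_eq_zero this)
  have hv_not_p : v ∉ p.support := by
    intro hv
    have h1 : H.dist r v ≤ (p.takeUntil v hv).length := SimpleGraph.dist_le _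
    have h3 : (p.takeUntil v hv).length + (p.dropUntil v hv).length = p.length := by
      have := congrArg Walk.length (p.take_spec hv)
      rwa [Walk.length_append] at this
    have : (p.dropUntil v hv).length = 0 := by omega
    exact huv.ne (Walk.eq_of_length_eq_zero this).symm
  -- pick common vertex of p and q maximizing dist r ·
  have hSne : (Finset.univ.filter (fun z => z ∈ p.support ∧ z ∈ q.support)).Nonempty :=
    ⟨r, by simp [Walk.start_mem_support]⟩
  obtain ⟨z, hzS, hzmax⟩ := Finset.exists_max_image _ (fun z => H.dist r z) hSne
  simp only [Finset.mem_filter, Finset.mem_univ, true_and] at hzS hzmax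
  obtain ⟨hzp, hzq⟩ := hzS
  obtain ⟨hdist_rz_p, hdist_zu⟩ := aux_split p hp_len hzp
  obtain ⟨hdist_rz_q, hdist_zv⟩ := aux_split q hq_len hzq
  set j := H.dist r z with hjdef
  set p2 := p.dropUntil z hzp with hp2def
  set q2 := q.dropUntil z hzq with hq2def
  have hp2_path : p2.IsPath := hp_path.dropUntil hzp
  have hq2_path : q2.IsPath := hq_path.dropUntil hzq
  have hp2_len : p2.length = H.dist z u := hdist_zu.symm
  have hq2_len : q2.length = H.dist z v := hdist_zv.symm
  have hlen_p : (p.takeUntil z hzp).length + p2.length = p.length := by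
    have := congrArg Walk.length (p.take_spec hzp)
    rwa [Walk.length_append] at this
  have hlen_q : (q.takeUntil z hzq).length + q2.length = q.length := by
    have := congrArg Walk.length (q.take_spec hzq)
    rwa [Walk.length_append] at this
  -- disjointness
  have hdisj : ∀ a, a ∈ p2.support → a ∈ q2.support → a = z := by
    intro a hap2 haq2
    have hap : a ∈ p.support := p.support_dropUntil_subset hzp hap2
    have haq : a ∈ q.support := q.support_dropUntil_subset hzq haq2
    have hmax : H.dist r a ≤ j := hzmax a ⟨hap, haq⟩
    obtain ⟨ht, hd⟩ := aux_split p2 hp2_len hap2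
    have hsum : (p2.takeUntil a hap2).length + (p2.dropUntil a hap2).length = p2.length := by
      have := congrArg Walk.length (p2.take_spec hap2)
      rwa [Walk.length_append] at this
    -- dist r u ≤ dist r a + (p2.dropUntil a).length
    obtain ⟨w1, hw1⟩ := (p.takeUntil a hap).reachable.exists_walk_length_eq_dist
    have htri : H.dist r u ≤ H.dist r a + (p2.dropUntil a hap2).length := by
      have := SimpleGraph.dist_le (w1.append (p2.dropUntil a hap2))
      rwa [Walk.length_append, hw1] at this
    have hzero : (p2.takeUntil a hap2).length = 0 := by omega
    exact (Walk.eq_of_length_eq_zero hzero).symm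
  -- build the cycle
  have hT_path : (q2.reverse.append p2).IsPath := by
    rw [Walk.isPath_def, Walk.support_append, Walk.support_reverse]
    refine List.Nodup.append (List.nodup_reverse.mpr hq2_path.support_nodup) (hp2_path.support_nodup.tail) ?_
    intro a haq hap
    have haq' : a ∈ q2.support := by simpa using haq
    have hap' : a ∈ p2.support := List.mem_of_mem_tail hap
    have : a = z := hdisj a hap' haq'
    subst this
    have := hp2_path.support_nodup
    rw [p2.support_eq_cons] at this
    exact (List.nodup_cons.mp this).1 hap
  have hne_edge : s(u, v) ∉ (q2.reverse.append p2).edges := by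
    rw [Walk.edges_append, List.mem_append, Walk.edges_reverse]
    rintro (h | h)
    · have : s(u,v) ∈ q2.edges := by simpa using h
      exact hu_not_q (q.support_dropUntil_subset hzq
        (Walk.fst_mem_support_of_mem_edges q2 this))
    · have : s(v,u) ∈ p2.edges := by rwa [Sym2.eq_swap] at h
      exact hv_not_p (p.support_dropUntil_subset hzp
        (Walk.fst_mem_support_of_mem_edges p2 this))
  have hcyc : (Walk.cons huv (q2.reverse.append p2)).IsCycle :=
    Path.cons_isCycle ⟨_, hT_path⟩ huv hne_edge
  have hlt := hgirth u _ hcyc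
  rw [Walk.length_cons, Walk.length_append, Walk.length_reverse] at hlt
  omega

/-- If the vertices of a finite simple graph G are partitioned into c sets
such that within each induced part any two vertices in the same connected component are
at distance at most d (inside the induced subgraph), and every cycle of G has length
greater than 2d+1, then the chromatic number of G is at most 2c. -/
theorem stmt_16 {V : Type*} [Fintype V] [DecidableEq V]
    (G : SimpleGraph V) (c d : ℕ)
    (P : Fin c → Set V)
    (hdisj : ∀ i j, i ≠ j → Disjoint (P i) (P j))
    (hcover : ∀ x, ∃ i, x ∈ P i)
    (hdiam : ∀ i, ∀ u v : ↥(P i), (G.induce (P i)).Reachable u v →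
      (G.induce (P i)).dist u v ≤ d)
    (hgirth : ∀ (v : V) (p : G.Walk v v), p.IsCycle → 2*d + 1 < p.length) :
    G.chromaticNumber ≤ ((2*c : ℕ) : ℕ∞) := by
  classical
  choose idx hidx using hcover
  -- level function inside a part
  let lvl : ∀ i : Fin c, ↥(P i) → ℕ := fun i u =>
    (G.induce (P i)).dist ((G.induce (P i)).connectedComponentMk u).out u
  have congrf : ∀ (i j : Fin c), i = j → ∀ (a : V) (ha : a ∈ P i) (ha' : a ∈ P j),
      lvl i ⟨a, ha⟩ = lvl j ⟨a, ha'⟩ := by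
    rintro i j rfl a ha ha'; rfl
  -- the coloring
  let fcol : V → Fin c × Bool := fun x => (idx x, decide (Odd (lvl (idx x) ⟨x, hidx x⟩)))
  have hvalid : ∀ ⦃x y : V⦄, G.Adj x y → fcol x ≠ fcol y := by
    intro x y hadj hEq
    have h1 : idx x = idx y := congrArg Prod.fst hEq
    have h2 : decide (Odd (lvl (idx x) ⟨x, hidx x⟩))
        = decide (Odd (lvl (idx y) ⟨y, hidx y⟩)) := congrArg Prod.snd hEq
    set i := idx x with hidef
    have hy' : y ∈ P i := by rw [h1]; exact hidx y
    have h2' : decide (Odd (lvl i ⟨x, hidx x⟩)) = decide (Odd (lvl i ⟨y, hy'⟩)) := by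
      rw [h2]; exact congrArg (fun n => decide (Odd n)) (congrf (idx y) i h1.symm y (hidx y) hy')
    set H := G.induce (P i) with hHdef
    have hadj' : H.Adj ⟨x, hidx x⟩ ⟨y, hy'⟩ := hadj
    -- same component, same root
    have hcomp : H.connectedComponentMk ⟨x, hidx x⟩ = H.connectedComponentMk ⟨y, hy'⟩ :=
      ConnectedComponent.connectedComponentMk_eq_of_adj hadj'
    set r : ↥(P i) := (H.connectedComponentMk ⟨x, hidx x⟩).out with hrdef
    have hrx : H.Reachable r ⟨x, hidx x⟩ := by
      have : H.connectedComponentMk r = H.connectedComponentMk ⟨x, hidx x⟩ :=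
        (H.connectedComponentMk ⟨x, hidx x⟩).out_eq
      exact ConnectedComponent.exact this
    have hlvl_x : lvl i ⟨x, hidx x⟩ = H.dist r ⟨x, hidx x⟩ := rfl
    have hlvl_y : lvl i ⟨y, hy'⟩ = H.dist r ⟨y, hy'⟩ := by
      show (G.induce (P i)).dist ((G.induce (P i)).connectedComponentMk ⟨y, hy'⟩).out _ = _
      rw [← hcomp]
    -- distances differ by at most 1
    obtain ⟨w, hw⟩ := hrx.exists_walk_length_eq_dist
    have hd1 : H.dist r ⟨y, hy'⟩ ≤ H.dist r ⟨x, hidx x⟩ + 1 := by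
      have := SimpleGraph.dist_le (w.concat hadj')
      rwa [Walk.length_concat, hw] at this
    have hry : H.Reachable r ⟨y, hy'⟩ := hrx.trans hadj'.reachable
    obtain ⟨w2, hw2⟩ := hry.exists_walk_length_eq_dist
    have hd2 : H.dist r ⟨x, hidx x⟩ ≤ H.dist r ⟨y, hy'⟩ + 1 := by
      have := SimpleGraph.dist_le (w2.concat hadj'.symm)
      rwa [Walk.length_concat, hw2] at this
    have hpar : Odd (H.dist r ⟨x, hidx x⟩) ↔ Odd (H.dist r ⟨y, hy'⟩) := by
      rw [← hlvl_x, ← hlvl_y]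
      simpa using congrArg (fun b => b = true) h2'
    have heqd : H.dist r ⟨x, hidx x⟩ = H.dist r ⟨y, hy'⟩ := by
      rcases Nat.even_or_odd (H.dist r ⟨x, hidx x⟩) with he | ho
      · have : ¬ Odd (H.dist r ⟨y, hy'⟩) := by
          rw [← hpar]; exact (Nat.not_odd_iff_even).mpr he
        rw [Nat.not_odd_iff_even] at this
        rw [Nat.even_iff] at he this; omega
      · have := hpar.mp ho
        rw [Nat.odd_iff] at ho this; omega
    -- girth within H
    haveI : Fintype ↥(P i) := Set.Finite.fintype (Set.toFinite _)
    have hgirth' : ∀ (z : ↥(P i)) (cyc : H.Walk z z), cyc.IsCycle → 2*d + 1 < cyc.length := by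
      intro z cyc hcyc
      have hinj : Function.Injective (SimpleGraph.Embedding.induce (P i) (G := G)).toHom :=
        Subtype.val_injective
      have hmc : (cyc.map (SimpleGraph.Embedding.induce (P i) (G := G)).toHom).IsCycle :=
        ((Walk.map_isCycle_iff_of_injective hinj).mpr hcyc)
      have := hgirth _ _ hmc
      rwa [Walk.length_map] at this
    exact no_equal_level_adj hgirth' hadj' hrx (hdiam i r ⟨x, hidx x⟩ hrx) heqd
  have col : G.Coloring (Fin c × Bool) := Coloring.mk fcol (fun h => hvalid h)
  have hcolorable : G.Colorable (2 * c) := by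
    have := col.colorable
    simpa [Fintype.card_prod, Nat.mul_comm] using this
  exact hcolorable.chromaticNumber_le
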